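/- Let q ≥ 1 and g be holomorphic on the unit disc. Then sup over z in D of (1−|z|²)·q|g(z)|^{q−1}|g'(z)| equals sup over distinct w, z in D of ||g(w)|^q − |g(z)|^q| / β(w,z), where β is the hyperbolic distance on the disc. -/

import Mathlib

open MeasureTheory Metric
open scoped ENNReal

/-- The hyperbolic distance on the unit disc:
`β(w,z) = (1/2) log((1+|φ_w(z)|)/(1−|φ_w(z)|))` with `φ_w(z) = (w−z)/(1−conj w · z)`. -/
noncomputable def hypDist (w z : ℂ) : ℝ :=
  (1 / 2) * Real.log
    ((1 + ‖(w - z) / (1 - (starRingEnd ℂ) w * z)‖)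
      / (1 - ‖(w - z) / (1 - (starRingEnd ℂ) w * z)‖))

open Complex Filter Set Asymptotics

noncomputable def Complex.abs : AbsoluteValue ℂ ℝ where
  toFun z := ‖z‖
  map_mul' := norm_mul
  nonneg' := norm_nonneg
  eq_zero' _ := norm_eq_zero
  add_le' := norm_add_le

lemma Complex.abs_conj (z : ℂ) : Complex.abs ((starRingEnd ℂ) z) = Complex.abs z := Complex.norm_conj z

lemma Complex.sq_abs (z : ℂ) : Complex.abs z ^ 2 = Complex.normSq z := Complex.sq_norm z

lemma Complex.abs_apply (z : ℂ) : Complex.abs z = Real.sqrt (Complex.normSq z) := Complex.norm_def z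

lemma Complex.abs_ofReal (r : ℝ) : Complex.abs (r : ℂ) = |r| := Complex.norm_real r

lemma Complex.norm_eq_abs (z : ℂ) : ‖z‖ = Complex.abs z := rfl

lemma Complex.continuous_abs : Continuous Complex.abs := continuous_norm

lemma Complex.abs_re_le_abs (z : ℂ) : |z.re| ≤ Complex.abs z := Complex.abs_re_le_norm z
open scoped ENNReal Topology

noncomputable def phi (w z : ℂ) : ℂ := (w - z) / (1 - (starRingEnd ℂ) w * z)

lemma normSq_key (w z : ℂ) : Complex.normSq (1 - (starRingEnd ℂ) w * z) - Complex.normSq (w - z)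
    = (1 - Complex.normSq w) * (1 - Complex.normSq z) := by
  simp [Complex.normSq_apply, Complex.mul_re, Complex.mul_im, Complex.sub_re, Complex.sub_im]
  ring

lemma denom_ne (w z : ℂ) (hw : Complex.abs w < 1) (hz : Complex.abs z < 1) :
    1 - (starRingEnd ℂ) w * z ≠ 0 := by
  intro h
  have h1 : Complex.abs ((starRingEnd ℂ) w * z) < 1 := by
    rw [map_mul, Complex.abs_conj]
    nlinarith [Complex.abs.nonneg w, Complex.abs.nonneg z]
  have : (1 : ℂ) = (starRingEnd ℂ) w * z := by linear_combination h
  rw [← this] at h1; simp at h1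

lemma absPhi_lt_one (w z : ℂ) (hw : Complex.abs w < 1) (hz : Complex.abs z < 1) :
    Complex.abs (phi w z) < 1 := by
  have hd := denom_ne w z hw hz
  have hdpos : 0 < Complex.normSq (1 - (starRingEnd ℂ) w * z) := normSq_pos.2 hd
  have hlt : Complex.normSq (w - z) < Complex.normSq (1 - (starRingEnd ℂ) w * z) := by
    have := normSq_key w z
    have hw2 : Complex.normSq w < 1 := by rw [← Complex.sq_abs]; nlinarith [Complex.abs.nonneg w]
    have hz2 : Complex.normSq z < 1 := by rw [← Complex.sq_abs]; nlinarith [Complex.abs.nonneg z]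
    nlinarith
  rw [phi, map_div₀]
  rw [div_lt_one (by simpa using Complex.abs.pos hd)]
  have := Complex.sq_abs (w - z); have := Complex.sq_abs (1 - (starRingEnd ℂ) w * z)
  nlinarith [Complex.abs.nonneg (w-z), Complex.abs.nonneg (1 - (starRingEnd ℂ) w * z)]

lemma phi_invol (w z : ℂ) (hw : Complex.abs w < 1) (hz : Complex.abs z < 1) :
    phi w (phi w z) = z := by
  have hd := denom_ne w z hw hz
  have hw2 : Complex.normSq w < 1 := by rw [← Complex.sq_abs]; nlinarith [Complex.abs.nonneg w]
  have hkey : 1 - (starRingEnd ℂ) w * phi w z = (1 - (starRingEnd ℂ) w * w) / (1 - (starRingEnd ℂ) w * z) := by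
    rw [phi]; field_simp; ring
  have hww : (1 : ℂ) - (starRingEnd ℂ) w * w ≠ 0 := by
    intro h
    have : ((1 : ℂ) - (starRingEnd ℂ) w * w) = ((1 - Complex.normSq w : ℝ) : ℂ) := by
      rw [mul_comm, Complex.mul_conj]; push_cast; ring
    rw [this] at h
    norm_cast at h
    linarith
  rw [phi, hkey, phi]
  rw [div_div_eq_mul_div, sub_mul, div_mul_cancel₀ _ hd, div_eq_iff hww]
  ring



lemma phi_hasDeriv (w u : ℂ) (hw : Complex.abs w < 1) (hu : Complex.abs u < 1) :
    HasDerivAt (phi w) (((starRingEnd ℂ) w * w - 1) / (1 - (starRingEnd ℂ) w * u)^2) u := by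
  have hd := denom_ne w u hw hu
  have h1 : HasDerivAt (fun z : ℂ => w - z) (-1) u := by
    simpa using (hasDerivAt_id u).const_sub w
  have h2 : HasDerivAt (fun z : ℂ => 1 - (starRingEnd ℂ) w * z) (-((starRingEnd ℂ) w)) u := by
    simpa using ((hasDerivAt_id u).const_mul ((starRingEnd ℂ) w)).const_sub (1:ℂ)
  have := h1.fun_div h2 hd
  refine this.congr_deriv ?_
  ring

lemma abs_phi_deriv (w u : ℂ) (hw : Complex.abs w < 1) (hu : Complex.abs u < 1) :
    Complex.abs (((starRingEnd ℂ) w * w - 1) / (1 - (starRingEnd ℂ) w * u)^2) * (1 - Complex.abs u ^ 2)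
      = 1 - Complex.abs (phi w u) ^ 2 := by
  have hd := denom_ne w u hw hu
  have hkey : Complex.normSq (1 - (starRingEnd ℂ) w * u) - Complex.normSq (w - u)
      = (1 - Complex.normSq w) * (1 - Complex.normSq u) := by
    simp [Complex.normSq_apply, Complex.mul_re, Complex.mul_im, Complex.sub_re, Complex.sub_im]
    ring
  have hdpos : 0 < Complex.normSq (1 - (starRingEnd ℂ) w * u) := normSq_pos.2 hd
  have e1 : Complex.abs ((starRingEnd ℂ) w * w - 1) = 1 - Complex.normSq w := by
    have : (starRingEnd ℂ) w * w - 1 = -(((1 - Complex.normSq w : ℝ)) : ℂ) := by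
      rw [mul_comm, Complex.mul_conj]; push_cast; ring
    rw [this, map_neg_eq_map, Complex.abs_ofReal]
    rw [_root_.abs_of_nonneg (by nlinarith [Complex.abs.nonneg w, Complex.sq_abs w] : (0:ℝ) ≤ 1 - Complex.normSq w)]
  rw [map_div₀, map_pow, e1, Complex.sq_abs, Complex.sq_abs, phi, map_div₀, div_pow,
    Complex.sq_abs, Complex.sq_abs]
  field_simp
  nlinarith [hkey]



lemma crpow_hasDerivAt {q : ℝ} {f : ℝ → ℂ} {d : ℂ} {t : ℝ}
    (hf : HasDerivAt f d t) (hcase : f t ≠ 0 ∨ 1 < q) :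
    HasDerivAt (fun s => Complex.abs (f s) ^ q)
      (q * Complex.abs (f t) ^ (q - 2) * ((f t).re * d.re + (f t).im * d.im)) t := by
  rcases eq_or_ne (f t) 0 with h0 | h0
  · -- zero case, q > 1
    have hq1 : 1 < q := hcase.resolve_left (by simp [h0])
    rw [h0]
    simp only [Complex.zero_re, Complex.zero_im, zero_mul, add_zero, mul_zero]
    rw [hasDerivAt_iff_tendsto_slope]
    have hbig : (fun y => f y) =O[nhds t] (fun y => y - t) := by
      simpa [h0] using hf.isBigO_sub
    rcases hbig.exists_pos with ⟨C, hC, hCbound⟩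
    rw [isBigOWith_iff] at hCbound
    have hsq : Tendsto (fun y : ℝ => C ^ q * |y - t| ^ (q - 1)) (nhdsWithin t {t}ᶜ) (nhds 0) := by
      have h1 : Tendsto (fun y : ℝ => |y - t|) (nhdsWithin t {t}ᶜ) (nhds 0) := by
        apply Tendsto.mono_left _ nhdsWithin_le_nhds
        have : Tendsto (fun y : ℝ => y - t) (nhds t) (nhds 0) := by
          simpa using (tendsto_id (x := nhds t)).sub_const t
        simpa using this.abs
      have h2 : Tendsto (fun x : ℝ => x ^ (q - 1)) (nhds 0) (nhds 0) := by
        have := Real.continuousAt_rpow_const 0 (q - 1) (Or.inr (by linarith))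
        have h3 : (0:ℝ) ^ (q-1) = 0 := Real.zero_rpow (by linarith)
        simpa [ContinuousAt, h3] using this
      simpa using (h2.comp h1).const_mul (C ^ q)
    apply squeeze_zero_norm' _ hsq
    filter_upwards [self_mem_nhdsWithin,
      mem_nhdsWithin_of_mem_nhds hCbound] with y hy hyC
    have hyt : y ≠ t := hy
    have habs : Complex.abs (f y) ≤ C * |y - t| := by
      simpa [Real.norm_eq_abs, Complex.norm_eq_abs] using hyC
    have h5 : ‖slope (fun s => Complex.abs (f s) ^ q) t y‖
        = Complex.abs (f y) ^ q / |y - t| := by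
      rw [slope_def_field]
      rw [Real.norm_eq_abs, abs_div, h0, map_zero]
      rw [Real.zero_rpow (by linarith), sub_zero, _root_.abs_of_nonneg (Real.rpow_nonneg (Complex.abs.nonneg _) q)]
    rw [h5]
    rw [div_le_iff₀ (by simp [sub_ne_zero.2 hyt])]
    calc Complex.abs (f y) ^ q ≤ (C * |y - t|) ^ q := by
          exact Real.rpow_le_rpow (Complex.abs.nonneg _) habs (by linarith)
      _ = C ^ q * |y - t| ^ (q - 1) * |y - t| := by
          rw [Real.mul_rpow hC.le (abs_nonneg _)]
          have hne : |y - t| ≠ 0 := by simp [sub_ne_zero.2 hyt]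
          have h6 : |y - t| ^ q = |y - t| ^ (q - 1) * |y - t| := by
            rw [← Real.rpow_add_one hne (q-1)]; ring_nf
          rw [h6]; ring
  · -- nonzero case
    have hN0 : Complex.normSq (f t) ≠ 0 := by simpa [Complex.normSq_eq_zero] using h0
    have hre : HasDerivAt (fun s => (f s).re) d.re t :=
      Complex.reCLM.hasFDerivAt.comp_hasDerivAt t hf
    have him : HasDerivAt (fun s => (f s).im) d.im t :=
      Complex.imCLM.hasFDerivAt.comp_hasDerivAt t hf
    have hN : HasDerivAt (fun s => Complex.normSq (f s))
        (2 * ((f t).re * d.re + (f t).im * d.im)) t := by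
      have := (hre.fun_mul hre).fun_add (him.fun_mul him)
      simp only [Complex.normSq_apply]
      refine this.congr_deriv ?_
      ring
    have hmain := hN.rpow_const (p := q / 2) (Or.inl hN0)
    have hfun : (fun s => Complex.normSq (f s) ^ (q / 2)) = fun s => Complex.abs (f s) ^ q := by
      funext s
      rw [Complex.abs_apply, Real.sqrt_eq_rpow, ← Real.rpow_mul (Complex.normSq_nonneg _)]
      congr 1; ring
    rw [hfun] at hmain
    convert hmain using 1
    have habs2 : Complex.abs (f t) ^ (q - 2) = Complex.normSq (f t) ^ (q / 2 - 1) := by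
      rw [Complex.abs_apply, Real.sqrt_eq_rpow, ← Real.rpow_mul (Complex.normSq_nonneg _)]
      congr 1
      ring
    rw [habs2]
    ring



lemma bound_absF' {q : ℝ} (hq : 1 ≤ q) (z d : ℂ) :
    |q * Complex.abs z ^ (q-2) * (z.re*d.re + z.im*d.im)|
      ≤ q * Complex.abs z ^ (q-1) * Complex.abs d := by
  rcases eq_or_ne z 0 with rfl | hz
  · simp
    positivity
  · have hS : |z.re*d.re + z.im*d.im| ≤ Complex.abs z * Complex.abs d := by
    -- S = re (conj z * d)
      have : z.re*d.re + z.im*d.im = ((starRingEnd ℂ) z * d).re := by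
        simp [Complex.mul_re]
      rw [this]
      calc |((starRingEnd ℂ) z * d).re| ≤ Complex.abs ((starRingEnd ℂ) z * d) :=
            Complex.abs_re_le_abs _
        _ = Complex.abs z * Complex.abs d := by rw [map_mul, Complex.abs_conj]
    have habs : Complex.abs z ≠ 0 := by simpa using hz
    have h1 : Complex.abs z ^ (q-2) * Complex.abs z = Complex.abs z ^ (q-1) := by
      rw [← Real.rpow_add_one habs (q-2)]; ring_nf
    rw [abs_mul, abs_mul, _root_.abs_of_nonneg (by linarith : (0:ℝ) ≤ q),
      _root_.abs_of_nonneg (Real.rpow_nonneg (Complex.abs.nonneg _) _)]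
    calc q * Complex.abs z ^ (q-2) * |z.re*d.re + z.im*d.im|
        ≤ q * Complex.abs z ^ (q-2) * (Complex.abs z * Complex.abs d) := by
          apply mul_le_mul_of_nonneg_left hS
          positivity
      _ = q * Complex.abs z ^ (q-1) * Complex.abs d := by rw [← h1]; ring

lemma B_hasDeriv (s r : ℝ) (t : ℝ) (h1 : 0 < 1 + t*r) (h2 : 0 < 1 - t*r) :
    HasDerivAt (fun t => s * ((1/2) * (Real.log (1+t*r) - Real.log (1-t*r))))
      (s * r / (1 - t^2*r^2)) t := by
  have hi1 : HasDerivAt (fun t : ℝ => 1 + t*r) r t := by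
    simpa using ((hasDerivAt_id t).mul_const r).const_add 1
  have hi2 : HasDerivAt (fun t : ℝ => 1 - t*r) (-r) t := by
    simpa using ((hasDerivAt_id t).mul_const r).const_sub 1
  have hl1 : HasDerivAt (fun t : ℝ => Real.log (1+t*r)) ((1+t*r)⁻¹ * r) t :=
    by have := (Real.hasDerivAt_log h1.ne').comp t hi1; exact this
  have hl2 : HasDerivAt (fun t : ℝ => Real.log (1-t*r)) ((1-t*r)⁻¹ * (-r)) t :=
    by have := (Real.hasDerivAt_log h2.ne').comp t hi2; exact this
  have := ((hl1.fun_sub hl2).const_mul (1/2 : ℝ)).const_mul s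
  refine this.congr_deriv ?_
  have h3 : (1 - t^2*r^2) ≠ 0 := by nlinarith
  field_simp
  ring



lemma key_lip {q : ℝ} (hq : 1 ≤ q) {h : ℂ → ℂ}
    (hh : DifferentiableOn ℂ h (Metric.ball 0 1))
    {s : ℝ} (hs : ∀ u : ℂ, Complex.abs u < 1 →
      (1 - Complex.abs u ^ 2) * (q * Complex.abs (h u) ^ (q - 1) * Complex.abs (deriv h u)) ≤ s)
    {a : ℂ} (ha : Complex.abs a < 1) :
    |Complex.abs (h a) ^ q - Complex.abs (h 0) ^ q|
      ≤ s * ((1/2) * Real.log ((1 + Complex.abs a) / (1 - Complex.abs a))) := by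
  set r := Complex.abs a with hr
  have hr0 : 0 ≤ r := Complex.abs.nonneg a
  have hr1 : r < 1 := ha
  have habs_ta : ∀ t ∈ Icc (0:ℝ) 1, Complex.abs ((t:ℂ) * a) = t * r := by
    intro t ht
    rw [map_mul, Complex.abs_ofReal, _root_.abs_of_nonneg ht.1]
  have hmem : ∀ t ∈ Icc (0:ℝ) 1, Complex.abs ((t:ℂ) * a) < 1 := by
    intro t ht
    rw [habs_ta t ht]
    nlinarith [ht.1, ht.2]
  have hfd : ∀ t ∈ Icc (0:ℝ) 1,
      HasDerivAt (fun t : ℝ => h ((t:ℂ) * a)) (deriv h ((t:ℂ)*a) * a) t := by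
    intro t ht
    have hd : HasDerivAt h (deriv h ((t:ℂ)*a)) ((t:ℂ)*a) :=
      (hh.differentiableAt (Metric.isOpen_ball.mem_nhds
        (by rw [Metric.mem_ball, dist_zero_right]; exact hmem t ht))).hasDerivAt
    have hinner : HasDerivAt (fun z : ℂ => z * a) a (t:ℂ) := by
      simpa using (hasDerivAt_id ((t:ℂ))).mul_const a
    exact (HasDerivAt.comp (t:ℂ) hd hinner).comp_ofReal
  -- boundary function
  set B : ℝ → ℝ := fun t => s * ((1/2) * (Real.log (1+t*r) - Real.log (1-t*r))) with hB
  set B' : ℝ → ℝ := fun t => s * r / (1 - t^2*r^2) with hB'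
  have hBt : ∀ t ∈ Icc (0:ℝ) 1, HasDerivAt B (B' t) t := by
    intro t ht
    exact B_hasDeriv s r t (by nlinarith [ht.1, ht.2]) (by nlinarith [ht.1, ht.2])
  have hBcont : ContinuousOn B (Icc 0 1) :=
    fun t ht => ((hBt t ht).continuousAt).continuousWithinAt
  have hBderiv : ∀ t ∈ Ico (0:ℝ) 1, HasDerivWithinAt B (B' t) (Ici t) t :=
    fun t ht => ((hBt t ⟨ht.1, ht.2.le⟩).hasDerivWithinAt)
  have hB0 : B 0 = 0 := by simp [hB]
  have hs0 : 0 ≤ s := by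
    have h00 := hs 0 (by simp)
    have h01 : (0:ℝ) ≤ (1 - Complex.abs (0:ℂ) ^ 2) *
        (q * Complex.abs (h 0) ^ (q-1) * Complex.abs (deriv h 0)) := by
      rw [map_zero]
      norm_num
      apply mul_nonneg (mul_nonneg (by linarith) (Real.rpow_nonneg (Complex.abs.nonneg _) _))
        (Complex.abs.nonneg _)
    linarith
  -- the pointwise derivative bound, common part
  have hbound : ∀ x ∈ Ico (0:ℝ) 1,
      q * Complex.abs (h ((x:ℂ)*a)) ^ (q-1) * Complex.abs (deriv h ((x:ℂ)*a) * a) ≤ B' x := by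
    intro x hx
    set u := (x:ℂ)*a with hu
    have hx1 : (0:ℝ) ≤ x := hx.1
    have hval : Complex.abs u = x * r := habs_ta x ⟨hx.1, hx.2.le⟩
    have hxr : x * r < 1 := by nlinarith [hx.2, mul_nonneg hx.1 (by linarith : (0:ℝ) ≤ 1 - r)]
    have hlt : (0:ℝ) < 1 - x^2*r^2 := by
      nlinarith [mul_pos (by linarith : (0:ℝ) < 1 - x*r)
        (by nlinarith [mul_nonneg hx.1 hr0] : (0:ℝ) < 1 + x*r)]
    rw [map_mul]
    rw [hB']
    have hsu := hs u (by rw [hval]; exact hxr)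
    rw [hval] at hsu
    rw [le_div_iff₀ hlt]
    nlinarith [hsu, Complex.abs.nonneg (deriv h u), Complex.abs.nonneg (h u),
      Real.rpow_nonneg (Complex.abs.nonneg (h u)) (q-1), hr0,
      mul_nonneg (mul_nonneg (by linarith : (0:ℝ) ≤ q)
        (Real.rpow_nonneg (Complex.abs.nonneg (h u)) (q-1))) (Complex.abs.nonneg (deriv h u))]
  have hexp : s * ((1/2) * Real.log ((1 + r) / (1 - r))) = B 1 := by
    rw [hB]
    have : Real.log ((1+r)/(1-r)) = Real.log (1+r) - Real.log (1-r) :=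
      Real.log_div (by linarith) (by linarith)
    simp only [this]
    norm_num
  rw [hexp]
  rcases eq_or_lt_of_le hq with hq1 | hq1
  · -- q = 1
    subst hq1
    have key := image_norm_le_of_norm_deriv_right_le_deriv_boundary'
      (f := fun t : ℝ => h ((t:ℂ)*a) - h 0) (f' := fun t : ℝ => deriv h ((t:ℂ)*a) * a)
      (a := 0) (b := 1)
      (fun t ht => (((hfd t ht).sub_const (h 0)).continuousAt).continuousWithinAt)
      (fun t ht => ((hfd t ⟨ht.1, ht.2.le⟩).sub_const (h 0)).hasDerivWithinAt)
      (by simp [hB0])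
      hBcont hBderiv
      (by
        intro x hx
        have := hbound x hx
        simpa [Complex.norm_eq_abs, Real.rpow_zero] using this)
      (right_mem_Icc.2 zero_le_one)
    have key1 : ‖h a - h 0‖ ≤ B 1 := by simpa using key
    calc |Complex.abs (h a) ^ (1:ℝ) - Complex.abs (h 0) ^ (1:ℝ)|
        = |‖h a‖ - ‖h 0‖| := by rw [Real.rpow_one, Real.rpow_one, Complex.norm_eq_abs, Complex.norm_eq_abs]
      _ ≤ ‖h a - h 0‖ := abs_norm_sub_norm_le _ _
      _ ≤ B 1 := key1
  · -- q > 1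
    set F : ℝ → ℝ := fun t => Complex.abs (h ((t:ℂ)*a)) ^ q with hF
    have hFd : ∀ t ∈ Icc (0:ℝ) 1, HasDerivAt F
        (q * Complex.abs (h ((t:ℂ)*a)) ^ (q - 2) *
          ((h ((t:ℂ)*a)).re * (deriv h ((t:ℂ)*a) * a).re +
           (h ((t:ℂ)*a)).im * (deriv h ((t:ℂ)*a) * a).im)) t :=
      fun t ht => crpow_hasDerivAt (hfd t ht) (Or.inr hq1)
    have key := image_norm_le_of_norm_deriv_right_le_deriv_boundary'
      (f := fun t : ℝ => F t - F 0)
      (f' := fun t : ℝ => q * Complex.abs (h ((t:ℂ)*a)) ^ (q - 2) *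
          ((h ((t:ℂ)*a)).re * (deriv h ((t:ℂ)*a) * a).re +
           (h ((t:ℂ)*a)).im * (deriv h ((t:ℂ)*a) * a).im))
      (a := 0) (b := 1)
      (fun t ht => (((hFd t ht).sub_const (F 0)).continuousAt).continuousWithinAt)
      (fun t ht => ((hFd t ⟨ht.1, ht.2.le⟩).sub_const (F 0)).hasDerivWithinAt)
      (by simp [hB0])
      hBcont hBderiv
      (by
        intro x hx
        calc ‖q * Complex.abs (h ((x:ℂ)*a)) ^ (q - 2) *
          ((h ((x:ℂ)*a)).re * (deriv h ((x:ℂ)*a) * a).re +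
           (h ((x:ℂ)*a)).im * (deriv h ((x:ℂ)*a) * a).im)‖
            ≤ q * Complex.abs (h ((x:ℂ)*a)) ^ (q-1) * Complex.abs (deriv h ((x:ℂ)*a) * a) :=
              bound_absF' hq _ _
          _ ≤ B' x := hbound x hx)
      (right_mem_Icc.2 zero_le_one)
    have key1 : ‖F 1 - F 0‖ ≤ B 1 := by simpa using key
    have e1 : F 1 = Complex.abs (h a) ^ q := by rw [hF]; norm_num
    have e0 : F 0 = Complex.abs (h 0) ^ q := by rw [hF]; norm_num
    rw [e1, e0, Real.norm_eq_abs] at key1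
    exact key1



lemma hypDist_pos {w z : ℂ} (hw : Complex.abs w < 1) (hz : Complex.abs z < 1)
    (hne : w ≠ z) : 0 < hypDist w z := by
  have h1 : Complex.abs (phi w z) < 1 := absPhi_lt_one w z hw hz
  have h0 : 0 < Complex.abs (phi w z) := by
    rw [phi, map_div₀]
    apply div_pos
    · simpa [sub_ne_zero] using Complex.abs.pos (sub_ne_zero.2 hne)
    · exact Complex.abs.pos (denom_ne w z hw hz)
  have : hypDist w z = (1/2) * Real.log ((1 + Complex.abs (phi w z)) / (1 - Complex.abs (phi w z))) := rfl
  rw [this]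
  have hlog : 0 < Real.log ((1 + Complex.abs (phi w z)) / (1 - Complex.abs (phi w z))) := by
    apply Real.log_pos
    rw [lt_div_iff₀ (by linarith)]
    linarith
  linarith

lemma lip_bound {q : ℝ} (hq : 1 ≤ q) {g : ℂ → ℂ}
    (hg : DifferentiableOn ℂ g (Metric.ball 0 1))
    {s : ℝ} (hs : ∀ u : ℂ, Complex.abs u < 1 →
      (1 - Complex.abs u ^ 2) * (q * Complex.abs (g u) ^ (q - 1) * Complex.abs (deriv g u)) ≤ s)
    {w z : ℂ} (hw : Complex.abs w < 1) (hz : Complex.abs z < 1) :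
    |Complex.abs (g w) ^ q - Complex.abs (g z) ^ q| ≤ s * hypDist w z := by
  set h : ℂ → ℂ := fun u => g (phi w u) with hdefh
  have hphiball : ∀ u : ℂ, Complex.abs u < 1 → Complex.abs (phi w u) < 1 :=
    fun u hu => absPhi_lt_one w u hw hu
  have hball : ∀ x : ℂ, Complex.abs x < 1 → x ∈ Metric.ball (0:ℂ) 1 := by
    intro x hx
    simpa [Metric.mem_ball, dist_zero_right, Complex.norm_eq_abs] using hx
  have hDh : ∀ u : ℂ, Complex.abs u < 1 →
      HasDerivAt h (deriv g (phi w u) * (((starRingEnd ℂ) w * w - 1) / (1 - (starRingEnd ℂ) w * u)^2)) u := by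
    intro u hu
    have hgd : HasDerivAt g (deriv g (phi w u)) (phi w u) :=
      (hg.differentiableAt (Metric.isOpen_ball.mem_nhds (hball _ (hphiball u hu)))).hasDerivAt
    exact HasDerivAt.comp u hgd (phi_hasDeriv w u hw hu)
  have hdiff : DifferentiableOn ℂ h (Metric.ball 0 1) := by
    intro u hu
    have hu' : Complex.abs u < 1 := by
      simpa [Metric.mem_ball, dist_zero_right, Complex.norm_eq_abs] using hu
    exact ((hDh u hu').differentiableAt).differentiableWithinAt
  have hsh : ∀ u : ℂ, Complex.abs u < 1 →
      (1 - Complex.abs u ^ 2) * (q * Complex.abs (h u) ^ (q - 1) * Complex.abs (deriv h u)) ≤ s := by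
    intro u hu
    have hder : deriv h u = deriv g (phi w u) * (((starRingEnd ℂ) w * w - 1) / (1 - (starRingEnd ℂ) w * u)^2) :=
      (hDh u hu).deriv
    rw [hder, map_mul]
    have hphi := abs_phi_deriv w u hw hu
    have := hs (phi w u) (hphiball u hu)
    nlinarith [Complex.abs.nonneg (deriv g (phi w u)), Complex.abs.nonneg (g (phi w u)),
      Real.rpow_nonneg (Complex.abs.nonneg (g (phi w u))) (q-1),
      mul_nonneg (mul_nonneg (by linarith : (0:ℝ) ≤ q)
        (Real.rpow_nonneg (Complex.abs.nonneg (g (phi w u))) (q-1)))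
        (Complex.abs.nonneg (deriv g (phi w u)))]
  have ha : Complex.abs (phi w z) < 1 := hphiball z hz
  have hk := key_lip hq hdiff hsh ha
  have e1 : h (phi w z) = g z := by rw [hdefh]; simp only []; rw [phi_invol w z hw hz]
  have e0 : h 0 = g w := by
    rw [hdefh]; simp only []
    congr 1
    rw [phi]
    simp
  rw [e1, e0] at hk
  rw [abs_sub_comm] at hk
  exact hk.trans_eq (by simp only [hypDist, phi, Complex.norm_eq_abs])



-- the ψ slope limit
lemma psi_slope_tendsto :
    Filter.Tendsto (fun x : ℝ => ((1/2) * (Real.log (1+x) - Real.log (1-x))) / x)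
      (𝓝[≠] (0:ℝ)) (𝓝 1) := by
  have hB := B_hasDeriv 1 1 0 (by norm_num) (by norm_num)
  simp only [mul_one, one_mul] at hB
  norm_num at hB
  have := hasDerivAt_iff_tendsto_slope.1 hB
  have heq : slope (fun t : ℝ => (1/2) * (Real.log (1+t) - Real.log (1-t))) 0
      = fun x : ℝ => ((1/2) * (Real.log (1+x) - Real.log (1-x))) / x := by
    funext x
    rw [slope_def_field]
    norm_num
  rw [heq] at this
  exact this




lemma part2_aux {q : ℝ} {g : ℂ → ℂ} {z : ℂ} (hz : Complex.abs z < 1)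
    (e : ℂ) (he : Complex.abs e = 1) (D : ℝ) (hDnn : 0 ≤ D)
    (hnum : Tendsto (fun t : ℝ => |Complex.abs (g (z + (t:ℂ)*e)) ^ q - Complex.abs (g z) ^ q| / t)
      (𝓝[>] (0:ℝ)) (𝓝 D))
    (S : ℝ≥0∞)
    (hS : ∀ w w' : ℂ, Complex.abs w < 1 → Complex.abs w' < 1 → w ≠ w' →
      ENNReal.ofReal (|Complex.abs (g w) ^ q - Complex.abs (g w') ^ q| / hypDist w w') ≤ S) :
    ENNReal.ofReal ((1 - Complex.abs z ^ 2) * D) ≤ S := by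
  have hz2 : (0:ℝ) < 1 - Complex.abs z ^ 2 := by nlinarith [Complex.abs.nonneg z]
  set den : ℝ → ℝ := fun t : ℝ => Complex.abs (1 - (starRingEnd ℂ) (z + (t:ℂ)*e) * z) with hden_def
  have hden_cont : Tendsto den (𝓝 0) (𝓝 (1 - Complex.abs z ^ 2)) := by
    have hc : Continuous den := by
      apply Complex.continuous_abs.comp
      exact continuous_const.sub ((continuous_star.comp
        (continuous_const.add (Complex.continuous_ofReal.mul continuous_const))).mul continuous_const)
    have hval : den 0 = 1 - Complex.abs z ^ 2 := by
      have h1 : (starRingEnd ℂ) z * z = ((Complex.normSq z : ℝ) : ℂ) := by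
        rw [Complex.normSq_eq_conj_mul_self]
      simp only [hden_def, Complex.ofReal_zero, zero_mul, add_zero, h1]
      rw [show (1 : ℂ) - ((Complex.normSq z : ℝ) : ℂ) = (((1 - Complex.normSq z : ℝ)) : ℂ) by push_cast; ring]
      rw [Complex.abs_ofReal, _root_.abs_of_nonneg (by nlinarith [Complex.sq_abs z, Complex.abs.nonneg z]),
        ← Complex.sq_abs]
    rw [← hval]
    exact hc.tendsto 0
  set ρ : ℝ → ℝ := fun t : ℝ =>
    Complex.abs ((z + (t:ℂ)*e - z) / (1 - (starRingEnd ℂ) (z + (t:ℂ)*e) * z)) with hρ_def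
  have hρ_eq : ∀ t : ℝ, 0 < t → ρ t = t / den t := by
    intro t ht
    rw [hρ_def]
    simp only []
    rw [map_div₀]
    congr 1
    rw [add_sub_cancel_left, map_mul, Complex.abs_ofReal, he, _root_.abs_of_nonneg ht.le, mul_one]
  have hρt : Tendsto (fun t : ℝ => ρ t / t) (𝓝[>] (0:ℝ)) (𝓝 ((1 - Complex.abs z^2)⁻¹)) := by
    have h1 : Tendsto (fun t : ℝ => (den t)⁻¹) (𝓝[>] (0:ℝ)) (𝓝 ((1 - Complex.abs z^2)⁻¹)) :=
      (hden_cont.mono_left nhdsWithin_le_nhds).inv₀ (ne_of_gt hz2)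
    apply h1.congr'
    filter_upwards [self_mem_nhdsWithin] with t ht
    have ht' : (0:ℝ) < t := ht
    rw [hρ_eq t ht', div_div, mul_comm, ← div_div, div_self (ne_of_gt ht'), one_div]
  have hdenpos : ∀ᶠ (t : ℝ) in 𝓝[>] (0:ℝ), 0 < den t :=
    (hden_cont.mono_left nhdsWithin_le_nhds).eventually (eventually_gt_nhds hz2)
  have hρ_tendsto0 : Tendsto ρ (𝓝[>] (0:ℝ)) (𝓝 0) := by
    have hid : Tendsto (fun t : ℝ => t) (𝓝[>] (0:ℝ)) (𝓝 0) :=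
      (continuous_id.tendsto 0).mono_left nhdsWithin_le_nhds
    have := hρt.mul hid
    rw [mul_zero] at this
    apply this.congr'
    filter_upwards [self_mem_nhdsWithin] with t ht
    exact div_mul_cancel₀ (ρ t) (ne_of_gt ht)
  have hρ_pos : ∀ᶠ (t : ℝ) in 𝓝[>] (0:ℝ), 0 < ρ t := by
    filter_upwards [self_mem_nhdsWithin, hdenpos] with t ht hdt
    rw [hρ_eq t ht]
    exact div_pos ht hdt
  have hρ_lt1 : ∀ᶠ (t : ℝ) in 𝓝[>] (0:ℝ), ρ t < 1 :=
    hρ_tendsto0.eventually (eventually_lt_nhds one_pos)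
  have hρ0 : Tendsto ρ (𝓝[>] (0:ℝ)) (𝓝[≠] (0:ℝ)) := by
    rw [tendsto_nhdsWithin_iff]
    exact ⟨hρ_tendsto0, hρ_pos.mono fun t ht => ne_of_gt ht⟩
  have hhyp_eq : ∀ᶠ (t : ℝ) in 𝓝[>] (0:ℝ),
      hypDist (z + (t:ℂ)*e) z / t
        = (((1/2) * (Real.log (1 + ρ t) - Real.log (1 - ρ t))) / ρ t) * (ρ t / t) := by
    filter_upwards [hρ_pos, hρ_lt1] with t h0 h1
    have hhd : hypDist (z + (t:ℂ)*e) z = (1/2) * Real.log ((1 + ρ t) / (1 - ρ t)) := rfl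
    rw [hhd, Real.log_div (by linarith) (by linarith)]
    rw [div_mul_div_comm, mul_comm (ρ t) t, mul_div_mul_right _ _ (ne_of_gt h0)]
  have hden_lim : Tendsto (fun t : ℝ => hypDist (z + (t:ℂ)*e) z / t) (𝓝[>] (0:ℝ))
      (𝓝 ((1 - Complex.abs z^2)⁻¹)) := by
    have h1 := (psi_slope_tendsto.comp hρ0).mul hρt
    rw [one_mul] at h1
    exact h1.congr' (by filter_upwards [hhyp_eq] with t ht; rw [Function.comp_apply, ← ht])
  have hratio : Tendsto (fun t : ℝ => |Complex.abs (g (z + (t:ℂ)*e))^q - Complex.abs (g z)^q|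
      / hypDist (z + (t:ℂ)*e) z) (𝓝[>] (0:ℝ)) (𝓝 (D * (1 - Complex.abs z^2))) := by
    have h1 := hnum.div hden_lim (by positivity)
    rw [show D / (1 - Complex.abs z^2)⁻¹ = D * (1 - Complex.abs z^2) by
      field_simp] at h1
    apply h1.congr'
    filter_upwards [self_mem_nhdsWithin] with t ht
    have ht' : (0:ℝ) < t := ht
    simp only [Pi.div_apply]
    rcases eq_or_ne (hypDist (z + (t:ℂ)*e) z) 0 with hb | hb
    · simp [hb]
    · field_simp
  have hmem : ∀ᶠ (t : ℝ) in 𝓝[>] (0:ℝ), Complex.abs (z + (t:ℂ)*e) < 1 ∧ z + (t:ℂ)*e ≠ z := by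
    have hsmall : ∀ᶠ (t : ℝ) in 𝓝[>] (0:ℝ), t < 1 - Complex.abs z := by
      have : Tendsto (fun t : ℝ => t) (𝓝[>] (0:ℝ)) (𝓝 0) :=
        (continuous_id.tendsto 0).mono_left nhdsWithin_le_nhds
      exact this.eventually (eventually_lt_nhds (by linarith))
    filter_upwards [self_mem_nhdsWithin, hsmall] with t ht hts
    have ht' : (0:ℝ) < t := ht
    constructor
    · calc Complex.abs (z + (t:ℂ)*e) ≤ Complex.abs z + Complex.abs ((t:ℂ)*e) := Complex.abs.add_le _ _
        _ = Complex.abs z + t := by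
            rw [map_mul, Complex.abs_ofReal, he, _root_.abs_of_nonneg ht'.le, mul_one]
        _ < 1 := by linarith
    · intro hcontra
      have : ((t:ℂ)*e : ℂ) = 0 := by
        have := congrArg (· - z) hcontra
        simpa [add_sub_cancel_left] using this
      rcases mul_eq_zero.1 this with h | h
      · exact absurd (by exact_mod_cast h) (ne_of_gt ht')
      · rw [h, map_zero] at he; norm_num at he
  have hfinal : ∀ᶠ (t : ℝ) in 𝓝[>] (0:ℝ),
      ENNReal.ofReal (|Complex.abs (g (z + (t:ℂ)*e))^q - Complex.abs (g z)^q|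
        / hypDist (z + (t:ℂ)*e) z) ≤ S := by
    filter_upwards [hmem] with t ⟨htm, htne⟩
    exact hS _ _ htm hz htne
  have := le_of_tendsto ((ENNReal.continuous_ofReal.tendsto _).comp hratio) hfinal
  rwa [mul_comm] at this



lemma line_hasDeriv {g : ℂ → ℂ} {z : ℂ} (hgd : HasDerivAt g (deriv g z) z) (e : ℂ) :
    HasDerivAt (fun t : ℝ => g (z + (t:ℂ)*e)) (deriv g z * e) 0 := by
  have hinner : HasDerivAt (fun c : ℂ => z + c * e) e 0 := by
    simpa using ((hasDerivAt_id (0:ℂ)).mul_const e).const_add z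
  have hgd' : HasDerivAt g (deriv g z) ((fun c : ℂ => z + c * e) 0) := by simpa using hgd
  have hcomp : HasDerivAt (fun c : ℂ => g (z + c * e)) (deriv g z * e) 0 :=
    HasDerivAt.comp (0:ℂ) hgd' hinner
  have : HasDerivAt (fun t : ℝ => g (z + ((t:ℝ):ℂ) * e)) (deriv g z * e) 0 := by
    apply HasDerivAt.comp_ofReal (e := fun c : ℂ => g (z + c * e))
    simpa using hcomp
  exact this

lemma part2 {q : ℝ} (hq : 1 ≤ q) {g : ℂ → ℂ}
    (hg : DifferentiableOn ℂ g (Metric.ball 0 1))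
    {z : ℂ} (hz : Complex.abs z < 1) (S : ℝ≥0∞)
    (hS : ∀ w w' : ℂ, Complex.abs w < 1 → Complex.abs w' < 1 → w ≠ w' →
      ENNReal.ofReal (|Complex.abs (g w) ^ q - Complex.abs (g w') ^ q| / hypDist w w') ≤ S) :
    ENNReal.ofReal ((1 - Complex.abs z ^ 2) *
      (q * Complex.abs (g z) ^ (q - 1) * Complex.abs (deriv g z))) ≤ S := by
  have hball : z ∈ Metric.ball (0:ℂ) 1 := by
    simpa [Metric.mem_ball, dist_zero_right, Complex.norm_eq_abs] using hz
  have hgd : HasDerivAt g (deriv g z) z :=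
    (hg.differentiableAt (Metric.isOpen_ball.mem_nhds hball)).hasDerivAt
  rcases eq_or_ne (deriv g z) 0 with hd0 | hd0
  · simp [hd0]
  rcases eq_or_ne (g z) 0 with hg0 | hg0
  · rcases eq_or_lt_of_le hq with hq1 | hq1
    swap
    · rw [hg0, map_zero, Real.zero_rpow (by linarith)]
      simp
    · -- q = 1, g z = 0
      subst hq1
      set e : ℂ := 1 with he_def
      have he : Complex.abs e = 1 := by simp [he_def]
      set D : ℝ := Complex.abs (deriv g z) with hD_def
      have hDnn : 0 ≤ D := Complex.abs.nonneg _
      have hfd := line_hasDeriv hgd e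
      have hslope := hasDerivAt_iff_tendsto_slope.1 hfd
      have hmono : 𝓝[>] (0:ℝ) ≤ 𝓝[≠] (0:ℝ) :=
        nhdsWithin_mono 0 (fun x hx => ne_of_gt hx)
      have habs : Tendsto (fun t : ℝ => Complex.abs (slope (fun t : ℝ => g (z + (t:ℂ)*e)) 0 t))
          (𝓝[>] (0:ℝ)) (𝓝 (Complex.abs (deriv g z * e))) :=
        (Complex.continuous_abs.tendsto _).comp (hslope.mono_left hmono)
      have hnum : Tendsto (fun t : ℝ =>
          |Complex.abs (g (z + (t:ℂ)*e)) ^ (1:ℝ) - Complex.abs (g z) ^ (1:ℝ)| / t)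
          (𝓝[>] (0:ℝ)) (𝓝 D) := by
        have hval : Complex.abs (deriv g z * e) = D := by simp [he_def, hD_def]
        rw [← hval]
        apply habs.congr'
        filter_upwards [self_mem_nhdsWithin] with t ht
        have ht' : (0:ℝ) < t := ht
        have h2 : slope (fun t : ℝ => g (z + (t:ℂ)*e)) 0 t = (t⁻¹ : ℝ) • (g (z + (t:ℂ)*e)) := by
          rw [slope]
          simp [hg0, he_def]
        rw [h2, Real.rpow_one, Real.rpow_one, hg0, map_zero, sub_zero,
          Complex.real_smul, map_mul, Complex.abs_ofReal, abs_inv,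
          _root_.abs_of_nonneg ht'.le, _root_.abs_of_nonneg (Complex.abs.nonneg _),
          div_eq_inv_mul]
      have hfinal := part2_aux hz e he D hDnn hnum S hS
      have hgoal : (1 - Complex.abs z ^ 2) *
          ((1:ℝ) * Complex.abs (g z) ^ ((1:ℝ) - 1) * Complex.abs (deriv g z))
          = (1 - Complex.abs z ^ 2) * D := by
        rw [hg0, map_zero]
        norm_num [hD_def]
      rw [hgoal]
      exact hfinal
  · -- g z ≠ 0
    set A : ℝ := Complex.abs (g z) with hA_def
    set Bq : ℝ := Complex.abs (deriv g z) with hB_def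
    have hA0 : A ≠ 0 := by simpa [hA_def] using hg0
    have hB0 : Bq ≠ 0 := by simpa [hB_def] using hd0
    have hApos : 0 < A := lt_of_le_of_ne (Complex.abs.nonneg _) (Ne.symm hA0)
    have hBpos : 0 < Bq := lt_of_le_of_ne (Complex.abs.nonneg _) (Ne.symm hB0)
    set e : ℂ := g z * (starRingEnd ℂ) (deriv g z) / ((A * Bq : ℝ) : ℂ) with he_def
    have he : Complex.abs e = 1 := by
      rw [he_def, map_div₀, map_mul, Complex.abs_conj, Complex.abs_ofReal,
        _root_.abs_of_nonneg (by positivity)]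
      rw [← hA_def, ← hB_def]
      field_simp
    set D : ℝ := q * A ^ (q - 1) * Bq with hD_def
    have hDnn : 0 ≤ D := by
      rw [hD_def]
      apply mul_nonneg (mul_nonneg (by linarith) (Real.rpow_nonneg (Complex.abs.nonneg _) _))
        (Complex.abs.nonneg _)
    have hfd := line_hasDeriv hgd e
    have hprod : (starRingEnd ℂ) (g z) * (deriv g z * e) = ((A * Bq : ℝ) : ℂ) := by
      rw [he_def]
      have e1 : (starRingEnd ℂ) (g z) * (g z) = ((A^2 : ℝ) : ℂ) := by
        rw [mul_comm, Complex.mul_conj, hA_def, Complex.sq_abs]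
      have e2 : deriv g z * (starRingEnd ℂ) (deriv g z) = ((Bq^2 : ℝ) : ℂ) := by
        rw [Complex.mul_conj, hB_def, Complex.sq_abs]
      have hABne : ((A * Bq : ℝ) : ℂ) ≠ 0 := by
        simp only [ne_eq, Complex.ofReal_eq_zero]
        positivity
      field_simp
      push_cast at e1 e2 ⊢
      linear_combination (deriv g z * (starRingEnd ℂ) (deriv g z)) * e1 + ((A:ℂ)^2) * e2
    have hS_eq : (g z).re * (deriv g z * e).re + (g z).im * (deriv g z * e).im = A * Bq := by
      have h2 : (g z).re * (deriv g z * e).re + (g z).im * (deriv g z * e).im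
          = ((starRingEnd ℂ) (g z) * (deriv g z * e)).re := by
        simp [Complex.mul_re]
      rw [h2, hprod, Complex.ofReal_re]
    have hcr := crpow_hasDerivAt (q := q) hfd (Or.inl (by simpa using hg0))
    have hDval : HasDerivAt (fun t : ℝ => Complex.abs (g (z + (t:ℂ)*e)) ^ q) D 0 := by
      convert hcr using 1
      have hf0 : g (z + ((0:ℝ):ℂ)*e) = g z := by norm_num
      rw [hf0, hS_eq, ← hA_def, hD_def]
      have h3 : A ^ (q-2) * (A * Bq) = A ^ (q-1) * Bq := by
        have h4 : A ^ (q-2) * A = A ^ (q-1) := by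
          rw [← Real.rpow_add_one hA0 (q-2)]
          ring_nf
        calc A ^ (q-2) * (A * Bq) = (A ^ (q-2) * A) * Bq := by ring
          _ = A ^ (q-1) * Bq := by rw [h4]
      linear_combination (-q) * h3
    have hslope := hasDerivAt_iff_tendsto_slope.1 hDval
    have hmono : 𝓝[>] (0:ℝ) ≤ 𝓝[≠] (0:ℝ) :=
      nhdsWithin_mono 0 (fun x hx => ne_of_gt hx)
    have habs : Tendsto (fun t : ℝ =>
        |slope (fun t : ℝ => Complex.abs (g (z + (t:ℂ)*e)) ^ q) 0 t|) (𝓝[>] (0:ℝ)) (𝓝 |D|) :=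
      (_root_.continuous_abs.tendsto _).comp (hslope.mono_left hmono)
    have hnum : Tendsto (fun t : ℝ =>
        |Complex.abs (g (z + (t:ℂ)*e)) ^ q - Complex.abs (g z) ^ q| / t)
        (𝓝[>] (0:ℝ)) (𝓝 D) := by
      rw [show D = |D| from (_root_.abs_of_nonneg hDnn).symm]
      apply habs.congr'
      filter_upwards [self_mem_nhdsWithin] with t ht
      have ht' : (0:ℝ) < t := ht
      rw [slope_def_field, sub_zero, abs_div, _root_.abs_of_nonneg ht'.le]
      norm_num
    have hfinal := part2_aux hz e he D hDnn hnum S hS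
    rw [hD_def, hA_def, hB_def] at hfinal
    exact hfinal

/-- For `q ≥ 1` and `g` holomorphic on the unit disc,
`sup_z (1−|z|²) q |g z|^{q−1} |g' z|` equals
`sup_{w ≠ z} ||g w|^q − |g z|^q| / β(w,z)`. -/
theorem stmt_11 (q : ℝ) (hq : 1 ≤ q) (g : ℂ → ℂ)
    (hg : DifferentiableOn ℂ g (Metric.ball 0 1)) :
    (⨆ z : Metric.ball (0:ℂ) 1,
        ENNReal.ofReal ((1 - ‖(z : ℂ)‖ ^ 2) *
          (q * ‖g z‖ ^ (q - 1) * ‖deriv g z‖)))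
    = ⨆ p : {p : ℂ × ℂ //
          p.1 ∈ Metric.ball (0:ℂ) 1 ∧ p.2 ∈ Metric.ball (0:ℂ) 1 ∧ p.1 ≠ p.2},
        ENNReal.ofReal
          (|‖g (p : ℂ × ℂ).1‖ ^ q - ‖g (p : ℂ × ℂ).2‖ ^ q|
            / hypDist (p : ℂ × ℂ).1 (p : ℂ × ℂ).2) := by
  simp only [Complex.norm_eq_abs]
  have hmemiff : ∀ x : ℂ, x ∈ Metric.ball (0:ℂ) 1 ↔ Complex.abs x < 1 := by
    intro x
    rw [Metric.mem_ball, dist_zero_right, Complex.norm_eq_abs]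
  apply le_antisymm
  · apply iSup_le
    rintro ⟨z, hzmem⟩
    have hz : Complex.abs z < 1 := (hmemiff z).1 hzmem
    apply part2 hq hg hz
    intro w w' hw hw' hne
    exact le_iSup_of_le ⟨(w, w'), (hmemiff w).2 hw, (hmemiff w').2 hw', hne⟩ le_rfl
  · apply iSup_le
    rintro ⟨⟨w, w'⟩, hwmem, hw'mem, hne⟩
    have hw : Complex.abs w < 1 := (hmemiff w).1 hwmem
    have hw' : Complex.abs w' < 1 := (hmemiff w').1 hw'mem
    rcases eq_or_ne (⨆ z : Metric.ball (0:ℂ) 1,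
        ENNReal.ofReal ((1 - Complex.abs (z : ℂ) ^ 2) *
          (q * Complex.abs (g z) ^ (q - 1) * Complex.abs (deriv g z)))) ⊤ with htop | htop
    · rw [htop]; exact le_top
    · set L := (⨆ z : Metric.ball (0:ℂ) 1,
        ENNReal.ofReal ((1 - Complex.abs (z : ℂ) ^ 2) *
          (q * Complex.abs (g z) ^ (q - 1) * Complex.abs (deriv g z)))) with hL
      have hs : ∀ u : ℂ, Complex.abs u < 1 →
          (1 - Complex.abs u ^ 2) * (q * Complex.abs (g u) ^ (q - 1) * Complex.abs (deriv g u))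
            ≤ L.toReal := by
        intro u hu
        have hle : ENNReal.ofReal ((1 - Complex.abs u ^ 2) *
            (q * Complex.abs (g u) ^ (q - 1) * Complex.abs (deriv g u))) ≤ L :=
          le_iSup_of_le ⟨u, (hmemiff u).2 hu⟩ le_rfl
        have hnn : 0 ≤ (1 - Complex.abs u ^ 2) *
            (q * Complex.abs (g u) ^ (q - 1) * Complex.abs (deriv g u)) := by
          apply mul_nonneg (by nlinarith [Complex.abs.nonneg u])
          apply mul_nonneg (mul_nonneg (by linarith) (Real.rpow_nonneg (Complex.abs.nonneg _) _))
            (Complex.abs.nonneg _)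
        calc (1 - Complex.abs u ^ 2) * (q * Complex.abs (g u) ^ (q - 1) * Complex.abs (deriv g u))
            = (ENNReal.ofReal ((1 - Complex.abs u ^ 2) *
                (q * Complex.abs (g u) ^ (q - 1) * Complex.abs (deriv g u)))).toReal :=
              (ENNReal.toReal_ofReal hnn).symm
          _ ≤ L.toReal := ENNReal.toReal_mono htop hle
      have hlb := lip_bound hq hg hs hw hw'
      have hpos := hypDist_pos hw hw' hne
      have hdiv : |Complex.abs (g w) ^ q - Complex.abs (g w') ^ q| / hypDist w w' ≤ L.toReal := by
        rw [div_le_iff₀ hpos]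
        linarith [hlb]
      calc ENNReal.ofReal (|Complex.abs (g w) ^ q - Complex.abs (g w') ^ q| / hypDist w w')
          ≤ ENNReal.ofReal L.toReal := ENNReal.ofReal_le_ofReal hdiv
        _ = L := ENNReal.ofReal_toReal htop
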